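/- For every q ∈ {1,2} and every z ∈ S² with z ≠ (0,0,1) at which the manifold differential (mfderiv) of the warped cost φ̃_q := φ∘S_q vanishes, there exists p ∈ {1,2} with φ̃_q(z) − φ̃_p(z) ≥ 1/4. Consequently, for every δ with 0 < δ < 1/4, the family {S₁, S₂} is a δ-gap synergistic family adapted to φ. -/

import Mathlib

open scoped Manifold

instance : Fact (Module.finrank ℝ (EuclideanSpace ℝ (Fin 3)) = 2 + 1) :=
  ⟨finrank_euclideanSpace_fin⟩

/-- Application of a `3 × 3` real matrix to a vector of Euclidean 3-space by
matrix-vector multiplication. -/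
noncomputable def matApp3 (A : Matrix (Fin 3) (Fin 3) ℝ)
    (z : EuclideanSpace ℝ (Fin 3)) : EuclideanSpace ℝ (Fin 3) :=
  Matrix.toEuclideanLin A z

/-- The cost `φ(z) = 1 − z₃` on the ambient space `ℝ³`. -/
noncomputable def phiAmb3 (w : EuclideanSpace ℝ (Fin 3)) : ℝ := 1 - w 2

/-- The cross-product matrix `[u]×` of `u = (0, 1, 0)`, so `[u]× z = u × z`. -/
noncomputable def uCross : Matrix (Fin 3) (Fin 3) ℝ := !![0, 0, 1; 0, 0, 0; -1, 0, 0]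

/-- The gains `k₁ = 1/2`, `k₂ = −1/2`. -/
noncomputable def kGain3 : Fin 2 → ℝ := ![1 / 2, -(1 / 2)]

/-- The warping map `S_q` (with `γ = 1` and `α(r) = r²`): `S_q(z) = z` if `φ(z) ≤ 1`,
and `S_q(z) = exp(k_q·(φ(z)−1)²·[u]×)·z` otherwise; it preserves the unit sphere since
`[u]×` is skew-symmetric. -/
noncomputable def SWarp3 (q : Fin 2) (w : EuclideanSpace ℝ (Fin 3)) :
    EuclideanSpace ℝ (Fin 3) :=
  if phiAmb3 w ≤ 1 then w
  else matApp3 (NormedSpace.exp ((kGain3 q * (phiAmb3 w - 1) ^ 2) • uCross)) w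

/-- The warped cost `φ̃_q = φ ∘ S_q` as a function on the unit sphere `S²`. -/
noncomputable def phiWarp3 (q : Fin 2)
    (z : Metric.sphere (0 : EuclideanSpace ℝ (Fin 3)) 1) : ℝ :=
  phiAmb3 (SWarp3 q (z : EuclideanSpace ℝ (Fin 3)))

/-- The minimizer `(0, 0, 1)` of `φ` on the sphere. -/
noncomputable def northPole3 : EuclideanSpace ℝ (Fin 3) :=
  (WithLp.equiv 2 (Fin 3 → ℝ)).symm ![0, 0, 1]

/-! ### Auxiliary material -/

open Real
open scoped RealInnerProductSpace

noncomputable def uCross2 : Matrix (Fin 3) (Fin 3) ℝ := !![-1, 0, 0; 0, 0, 0; 0, 0, -1]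

attribute [local instance] Matrix.linftyOpNormedRing Matrix.linftyOpNormedAlgebra

lemma uCross_mul_self : uCross * uCross = uCross2 := by
  ext i j; fin_cases i <;> fin_cases j <;>
    simp [uCross, uCross2, Matrix.mul_apply, Fin.sum_univ_three, Matrix.vecHead, Matrix.vecTail]

lemma uCross_mul_sq : uCross * uCross2 = -uCross := by
  ext i j; fin_cases i <;> fin_cases j <;>
    simp [uCross, uCross2, Matrix.mul_apply, Fin.sum_univ_three, Matrix.vecHead, Matrix.vecTail]

noncomputable def rotM (θ : ℝ) : Matrix (Fin 3) (Fin 3) ℝ :=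
  1 + Real.sin θ • uCross + (1 - Real.cos θ) • uCross2

lemma rotM_hasDerivAt (θ : ℝ) :
    HasDerivAt rotM (Real.cos θ • uCross + Real.sin θ • uCross2) θ := by
  have h1 : HasDerivAt (fun t : ℝ => Real.sin t • uCross) (Real.cos θ • uCross) θ :=
    (Real.hasDerivAt_sin θ).smul_const _
  have h2 : HasDerivAt (fun t : ℝ => (1 - Real.cos t) • uCross2) (Real.sin θ • uCross2) θ := by
    have := ((Real.hasDerivAt_cos θ).const_sub 1).smul_const uCross2
    simp only [neg_neg] at this
    exact this
  have h3 := ((h1.const_add (1 : Matrix (Fin 3) (Fin 3) ℝ)).add h2)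
  exact h3

lemma uCross_mul_rotM (θ : ℝ) :
    uCross * rotM θ = Real.cos θ • uCross + Real.sin θ • uCross2 := by
  rw [rotM, mul_add, mul_add, mul_one, Matrix.mul_smul, Matrix.mul_smul, uCross_mul_self,
    uCross_mul_sq]
  module

lemma exp_uCross_smul (θ : ℝ) : NormedSpace.exp (θ • uCross) = rotM θ := by
  have key : ∀ t : ℝ, NormedSpace.exp ((-t) • uCross) * rotM t = 1 := by
    have hd : ∀ t : ℝ,
        HasDerivAt (fun s : ℝ => NormedSpace.exp ((-s) • uCross) * rotM s) 0 t := by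
      intro t
      have he : HasDerivAt (fun s : ℝ => NormedSpace.exp ((-s) • uCross))
          ((-1 : ℝ) • (uCross * NormedSpace.exp ((-t) • uCross))) t := by
        have hg := hasDerivAt_exp_smul_const' (𝕂 := ℝ) uCross (-t)
        exact hg.scomp t (hasDerivAt_neg t)
      have := he.mul (rotM_hasDerivAt t)
      have hcomm : uCross * NormedSpace.exp ((-t) • uCross)
          = NormedSpace.exp ((-t) • uCross) * uCross :=
        ((((Commute.refl uCross).smul_right (-t)).exp_right)).eq
      refine this.congr_deriv ?_
      rw [hcomm, smul_mul_assoc, mul_assoc, uCross_mul_rotM, neg_one_smul]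
      simp
    have hc := is_const_of_deriv_eq_zero (fun t => (hd t).differentiableAt)
      (fun t => (hd t).deriv)
    intro t
    have := hc t 0
    simpa [rotM] using this
  have h1 : NormedSpace.exp (θ • uCross) * (NormedSpace.exp ((-θ) • uCross) * rotM θ)
      = NormedSpace.exp (θ • uCross) := by rw [key θ, mul_one]
  rw [← mul_assoc, ← Matrix.exp_add_of_commute] at h1
  · simpa using h1.symm
  · exact ((Commute.refl uCross).smul_right _).smul_left _

lemma matApp3_apply (A : Matrix (Fin 3) (Fin 3) ℝ) (w : EuclideanSpace ℝ (Fin 3)) (i : Fin 3) :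
    matApp3 A w i = A.mulVec w i := rfl

lemma matApp3_rot_two (θ : ℝ) (w : EuclideanSpace ℝ (Fin 3)) :
    matApp3 (rotM θ) w 2 = -(Real.sin θ * w 0) + Real.cos θ * w 2 := by
  rw [matApp3_apply, rotM]
  simp [Matrix.add_mulVec, Matrix.smul_mulVec, Matrix.mulVec, dotProduct,
    Fin.sum_univ_three, uCross, uCross2, Matrix.vecHead, Matrix.vecTail]

lemma swarp_id (q : Fin 2) (w : EuclideanSpace ℝ (Fin 3)) (h : 0 ≤ w 2) : SWarp3 q w = w := by
  rw [SWarp3, if_pos]; rw [phiAmb3]; linarith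

lemma F_eq_neg (q : Fin 2) (w : EuclideanSpace ℝ (Fin 3)) (h : w 2 < 0) :
    phiAmb3 (SWarp3 q w) =
      1 + w 0 * Real.sin (kGain3 q * (w 2) ^ 2) - w 2 * Real.cos (kGain3 q * (w 2) ^ 2) := by
  rw [SWarp3, if_neg (by rw [phiAmb3]; linarith)]
  have h2 : phiAmb3 w - 1 = -(w 2) := by rw [phiAmb3]; ring
  rw [h2]
  have h3 : (-(w 2)) ^ 2 = (w 2) ^ 2 := by ring
  rw [h3, exp_uCross_smul]
  rw [phiAmb3, matApp3_rot_two]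
  ring

set_option maxHeartbeats 1000000 in
lemma endgame3 (k a b c s co : ℝ) (hk : k = 1/2 ∨ k = -(1/2))
    (hs : s = Real.sin (k * c^2)) (hco : co = Real.cos (k * c^2))
    (hsum : a^2 + b^2 + c^2 = 1) (hc : c < 0)
    (e1 : s * c + (2*k*c*(a*co + c*s) - co) * (-a) = 0)
    (e2 : s * (-(a*b)) + (2*k*c*(a*co + c*s) - co) * (-(b*c)) = 0) :
    1/4 ≤ 2 * (a * s) := by
  have hk2 : k^2 = 1/4 := by rcases hk with h | h <;> rw [h] <;> norm_num
  have hpyth : s^2 + co^2 = 1 := by rw [hs, hco]; exact sin_sq_add_cos_sq _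
  have hc2pos : 0 < c^2 := by nlinarith
  have hc2 : c^2 ≤ 1 := by nlinarith [sq_nonneg a, sq_nonneg b]
  have hkabs : |k| = 1/2 := by rcases hk with h | h <;> rw [h] <;> norm_num
  have ht0abs : |k * c^2| ≤ 1/2 := by
    rw [abs_mul, hkabs, abs_of_nonneg (sq_nonneg c)]; nlinarith
  obtain ⟨hl, hr⟩ := abs_le.1 ht0abs
  have hπ := pi_gt_three
  have hsne : s ≠ 0 := by
    rw [hs]
    intro h
    have := (Real.sin_eq_zero_iff_of_lt_of_lt (by linarith) (by linarith)).1 h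
    rcases hk with hkk | hkk <;> rw [hkk] at this <;> nlinarith
  have hb : b = 0 := by
    by_contra hb
    have h1 : a * s + c * (2*k*c*(a*co + c*s) - co) = 0 := by
      have hb2 : b * (a * s + c * (2*k*c*(a*co + c*s) - co)) = 0 := by linear_combination -e2
      rcases mul_eq_zero.1 hb2 with h | h
      · exact absurd h hb
      · exact h
    have h2 : c * s - a * (2*k*c*(a*co + c*s) - co) = 0 := by linear_combination e1
    have h3 : (a^2 + c^2) * s = 0 := by linear_combination a * h1 + c * h2
    rcases mul_eq_zero.1 h3 with h | h
    · nlinarith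
    · exact hsne h
  have hac1 : a^2 + c^2 = 1 := by nlinarith
  have h2 : (a*co + c*s) * (2*k*a*c - 1) = 0 := by linear_combination -e1
  clear e1 e2 hsum ht0abs hsne
  have hG : a * co + c * s = 0 := by
    have h4a : (2*k*a*c)^2 = a^2*c^2 := by linear_combination (4*a^2*c^2)*hk2
    have h4b : a^2*c^2 ≤ 1/4 := by nlinarith [sq_nonneg (a^2 - c^2)]
    have h4 : (2*k*a*c)^2 ≤ 1/4 := by linarith
    have h5 : 2*k*a*c - 1 < 0 := by nlinarith [h4, sq_nonneg (2*k*a*c - 1)]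
    rcases mul_eq_zero.1 h2 with h | h
    · exact h
    · linarith
  have hV : (a*s - c*co)^2 = 1 := by
    have hid : (a*s - c*co)^2 + (a*co + c*s)^2 = (a^2+c^2)*(s^2+co^2) := by ring
    rw [hG, hac1, hpyth] at hid
    linarith
  have hcopos : 0 < co := by
    rw [hco]
    exact Real.cos_pos_of_mem_Ioo ⟨by linarith, by linarith⟩
  have hVcases : (a*s - c*co - 1) * (a*s - c*co + 1) = 0 := by linear_combination hV
  have hV1 : a*s - c*co = 1 := by
    rcases mul_eq_zero.1 hVcases with h | h
    · linarith
    · exfalso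
      have hVneg : a*s - c*co = -1 := by linarith
      have : c = co := by linear_combination (-co)*hVneg + s*hG + (-c)*hpyth
      linarith
  have hcco : c = -co := by linear_combination (-co)*hV1 + s*hG + (-c)*hpyth
  have has : a = s := by linear_combination s*hV1 + co*hG + (-a)*hpyth
  have hcase : c^2 ≤ 7/8 := by
    by_contra h
    push_neg at h
    have ht1 : c^2/2 ≤ 1 := by nlinarith
    have ht0 : 0 < c^2/2 := by nlinarith
    have hsin : c^2/2 - (c^2/2)^3/4 < Real.sin (c^2/2) := by
      have := Real.sin_gt_sub_cube ht0
      have := pow_pos ht0 3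
      linarith
    have hss : s^2 = Real.sin (c^2/2)^2 := by
      rcases hk with hkk | hkk
      · rw [hs, hkk, show (1/2 : ℝ) * c^2 = c^2/2 by ring]
      · rw [hs, hkk, show (-(1/2) : ℝ) * c^2 = -(c^2/2) by ring, Real.sin_neg]; ring
    have hs2 : Real.sin (c^2/2)^2 = 1 - c^2 := by nlinarith [hss, hpyth, hcco]
    have hx3 : (c^2)^3 ≤ c^2 := by nlinarith [sq_nonneg c, sq_nonneg (c^2 - 1), sq_nonneg (c^2 + 1)]
    have hb' : (15/32)*c^2 ≤ c^2/2 - (c^2/2)^3/4 := by nlinarith [hx3]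
    have hPpos : 0 < c^2/2 - (c^2/2)^3/4 := by nlinarith [hb', hc2pos]
    have hsq : (c^2/2 - (c^2/2)^3/4)^2 < Real.sin (c^2/2)^2 :=
      pow_lt_pow_left₀ hsin (le_of_lt hPpos) (by norm_num)
    have hbsq : ((15/32)*c^2)^2 ≤ (c^2/2 - (c^2/2)^3/4)^2 :=
      pow_le_pow_left₀ (by positivity) hb' 2
    nlinarith [hsq, hbsq, hs2, h, hc2pos, sq_nonneg (c^2 - 7/8)]
  nlinarith [hpyth, hcco, has, hcase]

noncomputable abbrev P0 : EuclideanSpace ℝ (Fin 3) →L[ℝ] ℝ := EuclideanSpace.proj 0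
noncomputable abbrev P2 : EuclideanSpace ℝ (Fin 3) →L[ℝ] ℝ := EuclideanSpace.proj 2

lemma continuous_comp2 : Continuous (fun w : EuclideanSpace ℝ (Fin 3) => w 2) := P2.continuous

lemma hasFDerivAt_F_neg (q : Fin 2) (z : EuclideanSpace ℝ (Fin 3)) (hz : z 2 < 0) :
    HasFDerivAt (fun w => phiAmb3 (SWarp3 q w))
      (Real.sin (kGain3 q * z 2 ^ 2) • P0 +
        (2 * kGain3 q * z 2 *
            (z 0 * Real.cos (kGain3 q * z 2 ^ 2) + z 2 * Real.sin (kGain3 q * z 2 ^ 2)) -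
          Real.cos (kGain3 q * z 2 ^ 2)) • P2) z := by
  set k := kGain3 q
  have hp0 : HasFDerivAt (fun w : EuclideanSpace ℝ (Fin 3) => w 0) (P0 : _ →L[ℝ] ℝ) z :=
    P0.hasFDerivAt
  have hp2 : HasFDerivAt (fun w : EuclideanSpace ℝ (Fin 3) => w 2) (P2 : _ →L[ℝ] ℝ) z :=
    P2.hasFDerivAt
  have hθ : HasFDerivAt (fun w : EuclideanSpace ℝ (Fin 3) => k * w 2 ^ 2)
      ((k * (2 * z 2)) • P2) z := by
    have := ((hp2.mul hp2).const_mul k)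
    have hfun : (fun w : EuclideanSpace ℝ (Fin 3) => k * w 2 ^ 2)
        = (fun y => k * ((fun w : EuclideanSpace ℝ (Fin 3) => w 2) * fun w : EuclideanSpace ℝ (Fin 3) => w 2) y) := by
      funext w; simp only [Pi.mul_apply]; ring
    rw [hfun]
    refine this.congr_fderiv ?_
    ext w
    simp [ContinuousLinearMap.smul_apply, ContinuousLinearMap.add_apply]
    ring
  have hsin : HasFDerivAt (fun w : EuclideanSpace ℝ (Fin 3) => Real.sin (k * w 2 ^ 2))
      (Real.cos (k * z 2 ^ 2) • ((k * (2 * z 2)) • P2)) z := by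
    have h1 := (Real.hasDerivAt_sin (k * z 2 ^ 2)).comp_hasFDerivAt z hθ
    exact h1
  have hcos : HasFDerivAt (fun w : EuclideanSpace ℝ (Fin 3) => Real.cos (k * w 2 ^ 2))
      ((-Real.sin (k * z 2 ^ 2)) • ((k * (2 * z 2)) • P2)) z := by
    have h1 := (Real.hasDerivAt_cos (k * z 2 ^ 2)).comp_hasFDerivAt z hθ
    exact h1
  have hG : HasFDerivAt (fun w : EuclideanSpace ℝ (Fin 3) =>
      1 + w 0 * Real.sin (k * w 2 ^ 2) - w 2 * Real.cos (k * w 2 ^ 2)) _ z :=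
    ((hp0.mul hsin).const_add 1).sub (hp2.mul hcos)
  have hev : (fun w => phiAmb3 (SWarp3 q w)) =ᶠ[nhds z] (fun w : EuclideanSpace ℝ (Fin 3) =>
      1 + w 0 * Real.sin (k * w 2 ^ 2) - w 2 * Real.cos (k * w 2 ^ 2)) := by
    have hopen : IsOpen {w : EuclideanSpace ℝ (Fin 3) | w 2 < 0} :=
      isOpen_lt continuous_comp2 continuous_const
    filter_upwards [hopen.mem_nhds hz] with w hw
    exact F_eq_neg q w hw
  have := hG.congr_of_eventuallyEq hev
  refine this.congr_fderiv ?_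
  ext w
  simp [ContinuousLinearMap.smul_apply, ContinuousLinearMap.add_apply,
    ContinuousLinearMap.sub_apply, PiLp.proj_apply]
  ring

lemma abs_comp_le_norm (x : EuclideanSpace ℝ (Fin 3)) (i : Fin 3) : |x i| ≤ ‖x‖ := by
  rw [EuclideanSpace.norm_eq, ← Real.sqrt_sq_eq_abs]
  apply Real.sqrt_le_sqrt
  have : (x i)^2 ≤ ∑ j : Fin 3, ‖x j‖^2 := by
    have := Finset.single_le_sum (f := fun j : Fin 3 => ‖x j‖^2)
      (fun j _ => by positivity) (Finset.mem_univ i)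
    simpa [Real.norm_eq_abs, sq_abs] using this
  simpa using this

lemma hasFDerivAt_F_pos (q : Fin 2) (z : EuclideanSpace ℝ (Fin 3)) (hz : 0 < z 2) :
    HasFDerivAt (fun w => phiAmb3 (SWarp3 q w)) (-P2 : _ →L[ℝ] ℝ) z := by
  have hg : HasFDerivAt (fun w : EuclideanSpace ℝ (Fin 3) => 1 - w 2) (-P2 : _ →L[ℝ] ℝ) z := by
    simpa using (P2.hasFDerivAt (x := z)).const_sub 1
  apply hg.congr_of_eventuallyEq
  have hopen : IsOpen {w : EuclideanSpace ℝ (Fin 3) | 0 < w 2} :=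
    isOpen_lt continuous_const continuous_comp2
  filter_upwards [hopen.mem_nhds hz] with w hw
  rw [swarp_id q w (le_of_lt hw), phiAmb3]

lemma kGain_abs (q : Fin 2) : |kGain3 q| = 1/2 := by
  fin_cases q <;> simp [kGain3] <;> norm_num

lemma F_sub_bound (q : Fin 2) (w : EuclideanSpace ℝ (Fin 3)) (hw0 : |w 0| ≤ 2)
    (hw2 : |w 2| ≤ 1) : |phiAmb3 (SWarp3 q w) - (1 - w 2)| ≤ 2 * (w 2)^2 := by
  rcases le_or_gt 0 (w 2) with h | h
  · rw [swarp_id q w h, phiAmb3]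
    simp
    positivity
  · rw [F_eq_neg q w h]
    have heq : 1 + w 0 * Real.sin (kGain3 q * w 2 ^ 2) - w 2 * Real.cos (kGain3 q * w 2 ^ 2)
        - (1 - w 2) = w 0 * Real.sin (kGain3 q * w 2 ^ 2)
          + w 2 * (1 - Real.cos (kGain3 q * w 2 ^ 2)) := by ring
    rw [heq]
    set θ := kGain3 q * w 2 ^ 2 with hθ
    have hθabs : |θ| = w 2 ^ 2 / 2 := by
      rw [hθ, abs_mul, kGain_abs, abs_of_nonneg (sq_nonneg _)]; ring
    have h1 : |w 0 * Real.sin θ| ≤ 2 * (w 2 ^ 2 / 2) := by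
      rw [abs_mul]
      exact mul_le_mul hw0 (le_trans (Real.abs_sin_le_abs) (le_of_eq hθabs)) (abs_nonneg _)
        (by norm_num)
    have hcosb : 1 - Real.cos θ ≤ θ^2 / 2 := by
      have hhalf : Real.sin (θ/2)^2 = (1 - Real.cos θ)/2 := by
        have := Real.abs_sin_half θ
        have h2 := congrArg (fun t => t^2) this
        simp only [sq_abs] at h2
        rw [h2, Real.sq_sqrt]
        nlinarith [Real.neg_one_le_cos θ, Real.cos_le_one θ]
      have hs2 : Real.sin (θ/2)^2 ≤ (θ/2)^2 := by
        calc Real.sin (θ/2)^2 = |Real.sin (θ/2)|^2 := (sq_abs _).symm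
          _ ≤ |θ/2|^2 := pow_le_pow_left₀ (abs_nonneg _) (Real.abs_sin_le_abs) 2
          _ = (θ/2)^2 := sq_abs _
      nlinarith [hhalf, hs2]
    have hcosnn : 0 ≤ 1 - Real.cos θ := by nlinarith [Real.cos_le_one θ]
    have h2 : |w 2 * (1 - Real.cos θ)| ≤ 1 * (w 2 ^2) := by
      rw [abs_mul, abs_of_nonneg hcosnn]
      have : θ^2/2 ≤ w 2 ^ 2 := by
        have hA : θ^2 = (w 2 ^2/2)^2 := by rw [← sq_abs θ, hθabs]
        have hw2sq : w 2 ^ 2 ≤ 1 := by rw [← sq_abs]; nlinarith [hw2, abs_nonneg (w 2)]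
        have h4 : (w 2^2)^2 ≤ w 2^2 := by nlinarith [sq_nonneg (w 2), hw2sq]
        nlinarith [hA, h4]
      calc |w 2| * (1 - Real.cos θ) ≤ 1 * (θ^2/2) :=
            mul_le_mul hw2 hcosb hcosnn (by norm_num)
        _ ≤ 1 * (w 2 ^ 2) := by linarith
    calc |w 0 * Real.sin θ + w 2 * (1 - Real.cos θ)|
        ≤ |w 0 * Real.sin θ| + |w 2 * (1 - Real.cos θ)| := abs_add_le _ _
      _ ≤ 2 * (w 2 ^ 2 / 2) + 1 * (w 2 ^ 2) := add_le_add h1 h2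
      _ = 2 * (w 2)^2 := by ring

lemma hasFDerivAt_F_seam (q : Fin 2) (z : EuclideanSpace ℝ (Fin 3)) (hz : z 2 = 0)
    (hz0 : |z 0| ≤ 1) :
    HasFDerivAt (fun w => phiAmb3 (SWarp3 q w)) (-P2 : _ →L[ℝ] ℝ) z := by
  rw [hasFDerivAt_iff_isLittleO_nhds_zero]
  rw [Asymptotics.isLittleO_iff]
  intro c hc
  have hδ : 0 < min 1 (c/2) := lt_min one_pos (by positivity)
  filter_upwards [Metric.ball_mem_nhds (0 : EuclideanSpace ℝ (Fin 3)) hδ] with v hv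
  have hvn : ‖v‖ < min 1 (c/2) := by simpa [dist_eq_norm] using hv
  have hv1 : ‖v‖ < 1 := lt_of_lt_of_le hvn (min_le_left _ _)
  have hv2 : ‖v‖ ≤ c/2 := le_of_lt (lt_of_lt_of_le hvn (min_le_right _ _))
  set w := z + v with hw
  have hw2 : w 2 = v 2 := by simp [hw, hz, PiLp.add_apply]
  have hvc2 : |v 2| ≤ ‖v‖ := abs_comp_le_norm v 2
  have hbound := F_sub_bound q w (by
      have : |w 0| ≤ |z 0| + |v 0| := by simp [hw, PiLp.add_apply]; exact abs_add_le _ _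
      have h2 := abs_comp_le_norm v 0
      linarith) (by rw [hw2]; linarith)
  have hFz : phiAmb3 (SWarp3 q z) = 1 - z 2 := by rw [swarp_id q z (le_of_eq hz.symm), phiAmb3]
  have hlin : (-P2 : EuclideanSpace ℝ (Fin 3) →L[ℝ] ℝ) v = -(v 2) := by
    simp [PiLp.proj_apply]
  calc ‖phiAmb3 (SWarp3 q (z + v)) - phiAmb3 (SWarp3 q z) - (-P2 : _ →L[ℝ] ℝ) v‖
      = |phiAmb3 (SWarp3 q w) - (1 - w 2)| := by
        rw [hFz, hlin, Real.norm_eq_abs]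
        congr 1
        have : w 2 = z 2 + v 2 := by simp [hw, PiLp.add_apply]
        rw [← hw]
        ring_nf
        rw [this, hz]
        ring
    _ ≤ 2 * (w 2)^2 := hbound
    _ ≤ c * ‖v‖ := by
        rw [hw2]
        have : (v 2)^2 ≤ ‖v‖ * ‖v‖ := by
          rw [← sq_abs]
          have := abs_nonneg (v 2)
          nlinarith [hvc2, norm_nonneg v]
        nlinarith [hv2, norm_nonneg v]

lemma tangent_zero (q : Fin 2) (z : Metric.sphere (0 : EuclideanSpace ℝ (Fin 3)) 1)
    (L : EuclideanSpace ℝ (Fin 3) →L[ℝ] ℝ)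
    (hF : HasFDerivAt (fun w => phiAmb3 (SWarp3 q w)) L (z : EuclideanSpace ℝ (Fin 3)))
    (h0 : mfderiv (𝓡 2) 𝓘(ℝ, ℝ) (phiWarp3 q) z = 0)
    (v : EuclideanSpace ℝ (Fin 3)) (hv : ⟪(z : EuclideanSpace ℝ (Fin 3)), v⟫ = 0) :
    L v = 0 := by
  have hco : MDifferentiableAt (𝓡 2) 𝓘(ℝ, EuclideanSpace ℝ (Fin 3))
      ((↑) : Metric.sphere (0 : EuclideanSpace ℝ (Fin 3)) 1 → EuclideanSpace ℝ (Fin 3)) z :=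
    (contMDiff_coe_sphere (m := 1) z).mdifferentiableAt one_ne_zero
  set D := mfderiv (𝓡 2) 𝓘(ℝ, EuclideanSpace ℝ (Fin 3))
    ((↑) : Metric.sphere (0 : EuclideanSpace ℝ (Fin 3)) 1 → EuclideanSpace ℝ (Fin 3)) z with hD
  have hcomp : HasMFDerivAt (𝓡 2) 𝓘(ℝ, ℝ) (phiWarp3 q) z (L.comp D) :=
    (hF.hasMFDerivAt).comp z hco.hasMFDerivAt
  have hmf := hcomp.mfderiv
  rw [h0] at hmf
  have hv' : v ∈ (ℝ ∙ ((z : EuclideanSpace ℝ (Fin 3))))ᗮ :=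
    (Submodule.mem_orthogonal_singleton_iff_inner_right).2 hv
  rw [← range_mfderiv_coe_sphere (n := 2) z] at hv'
  obtain ⟨u, hu⟩ := hv'
  have : L v = (L.comp D) u := by
    rw [← hu]; rfl
  rw [this, ← hmf]
  rfl

set_option maxHeartbeats 1000000 in
/-- For every `q ∈ {1,2}` and every `z ∈ S²` with `z ≠ (0,0,1)` at which
the manifold differential of the warped cost `φ̃_q = φ ∘ S_q` vanishes, there exists
`p ∈ {1,2}` with `φ̃_q(z) − φ̃_p(z) ≥ 1/4`. Consequently, for every `δ` with
`0 < δ < 1/4`, the family `{S₁, S₂}` is a `δ`-gap synergistic family adapted to `φ`. -/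
theorem stmt16 :
    (∀ q : Fin 2, ∀ z : Metric.sphere (0 : EuclideanSpace ℝ (Fin 3)) 1,
        (z : EuclideanSpace ℝ (Fin 3)) ≠ northPole3 →
        mfderiv (𝓡 2) 𝓘(ℝ, ℝ) (phiWarp3 q) z = 0 →
        ∃ p : Fin 2, 1 / 4 ≤ phiWarp3 q z - phiWarp3 p z) ∧
    (∀ δ : ℝ, 0 < δ → δ < 1 / 4 →
      ∀ q : Fin 2, ∀ z : Metric.sphere (0 : EuclideanSpace ℝ (Fin 3)) 1,
        (z : EuclideanSpace ℝ (Fin 3)) ≠ northPole3 →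
        mfderiv (𝓡 2) 𝓘(ℝ, ℝ) (phiWarp3 q) z = 0 →
        ∃ p : Fin 2, phiWarp3 p z + δ < phiWarp3 q z) := by
  have main : ∀ q : Fin 2, ∀ z : Metric.sphere (0 : EuclideanSpace ℝ (Fin 3)) 1,
      (z : EuclideanSpace ℝ (Fin 3)) ≠ northPole3 →
      mfderiv (𝓡 2) 𝓘(ℝ, ℝ) (phiWarp3 q) z = 0 →
      ∃ p : Fin 2, 1 / 4 ≤ phiWarp3 q z - phiWarp3 p z := by
    intro q z hne h0
    set a := (z : EuclideanSpace ℝ (Fin 3)) 0 with ha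
    set b := (z : EuclideanSpace ℝ (Fin 3)) 1 with hb
    set c := (z : EuclideanSpace ℝ (Fin 3)) 2 with hc
    have hnorm : ‖(z : EuclideanSpace ℝ (Fin 3))‖ = 1 := by
      simpa using mem_sphere_zero_iff_norm.1 z.2
    have hsum : a^2 + b^2 + c^2 = 1 := by
      rw [EuclideanSpace.norm_eq] at hnorm
      have h1 := Real.sqrt_eq_one.mp hnorm
      rw [ha, hb, hc]
      simpa [Fin.sum_univ_three, Real.norm_eq_abs, sq_abs] using h1
    rcases lt_trichotomy c 0 with hcneg | hczero | hcpos
    · -- the interesting region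
      have hF := hasFDerivAt_F_neg q (z : EuclideanSpace ℝ (Fin 3)) hcneg
      set k := kGain3 q with hkdef
      set s := Real.sin (k * c ^ 2) with hsdef
      set co := Real.cos (k * c ^ 2) with hcodef
      set L := s • P0 + (2 * k * c * (a * co + c * s) - co) • P2 with hL
      have hF' : HasFDerivAt (fun w => phiAmb3 (SWarp3 q w)) L
          (z : EuclideanSpace ℝ (Fin 3)) := hF
      set v1 : EuclideanSpace ℝ (Fin 3) :=
        (WithLp.equiv 2 (Fin 3 → ℝ)).symm ![c, 0, -a] with hv1def
      have hv1 : ⟪(z : EuclideanSpace ℝ (Fin 3)), v1⟫ = 0 := by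
        simp [hv1def, PiLp.inner_apply, Fin.sum_univ_three, WithLp.equiv_symm_apply,
          ← ha, ← hb, ← hc]
        ring
      have e1 := tangent_zero q z L hF' h0 v1 hv1
      rw [hL] at e1
      simp [hv1def, ContinuousLinearMap.add_apply, ContinuousLinearMap.smul_apply,
        PiLp.proj_apply, WithLp.equiv_symm_apply, smul_eq_mul] at e1
      set v2 : EuclideanSpace ℝ (Fin 3) :=
        (WithLp.equiv 2 (Fin 3 → ℝ)).symm ![-(a*b), a^2 + c^2, -(b*c)] with hv2def
      have hv2 : ⟪(z : EuclideanSpace ℝ (Fin 3)), v2⟫ = 0 := by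
        simp [hv2def, PiLp.inner_apply, Fin.sum_univ_three, WithLp.equiv_symm_apply,
          ← ha, ← hb, ← hc]
        ring
      have e2 := tangent_zero q z L hF' h0 v2 hv2
      rw [hL] at e2
      simp [hv2def, ContinuousLinearMap.add_apply, ContinuousLinearMap.smul_apply,
        PiLp.proj_apply, WithLp.equiv_symm_apply, smul_eq_mul] at e2
      have hk : k = 1/2 ∨ k = -(1/2) := by
        rw [hkdef]
        fin_cases q
        · left; simp [kGain3]
        · right; simp [kGain3]
      have e1' : s * c + (2*k*c*(a*co + c*s) - co) * (-a) = 0 := by linarith [e1]; 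
      have e2' : s * (-(a*b)) + (2*k*c*(a*co + c*s) - co) * (-(b*c)) = 0 := by linarith [e2]
      have hgap := endgame3 k a b c s co hk hsdef hcodef hsum hcneg e1' e2'
      -- the other warp index
      obtain ⟨p, hp⟩ : ∃ p : Fin 2, kGain3 p = -k := by
        rw [hkdef]
        fin_cases q
        · exact ⟨1, by simp [kGain3]⟩
        · exact ⟨0, by simp [kGain3]⟩
      refine ⟨p, ?_⟩
      have hq : phiWarp3 q z = 1 + a * s - c * co := by
        rw [hsdef, hcodef, hkdef, ha, hc]
        exact F_eq_neg q _ hcneg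
      have hpval : phiWarp3 p z = 1 - a * s - c * co := by
        have step1 : phiWarp3 p z = 1 + a * Real.sin (-k * c^2) - c * Real.cos (-k * c^2) := by
          rw [ha, hc, ← hp]
          exact F_eq_neg p _ hcneg
        rw [step1, show -k * c^2 = -(k * c^2) by ring, Real.sin_neg, Real.cos_neg,
          ← hsdef, ← hcodef]
        ring
      linarith [hgap, hq, hpval]
    · -- seam : contradiction
      exfalso
      have habs0 : |a| ≤ 1 := by
        rw [ha]
        have h := abs_comp_le_norm (z : EuclideanSpace ℝ (Fin 3)) 0
        rw [hnorm] at h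
        exact h
      have hF := hasFDerivAt_F_seam q (z : EuclideanSpace ℝ (Fin 3)) hczero habs0
      set v : EuclideanSpace ℝ (Fin 3) :=
        (WithLp.equiv 2 (Fin 3 → ℝ)).symm ![0, 0, -1] with hvdef
      have hv : ⟪(z : EuclideanSpace ℝ (Fin 3)), v⟫ = 0 := by
        simp [hvdef, PiLp.inner_apply, Fin.sum_univ_three, WithLp.equiv_symm_apply,
          ← ha, ← hb, ← hc, hczero]
      have := tangent_zero q z _ hF h0 v hv
      simp [hvdef, ContinuousLinearMap.neg_apply, PiLp.proj_apply,
        WithLp.equiv_symm_apply] at this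
    · -- positive region : contradiction with z ≠ north pole
      exfalso
      have hF := hasFDerivAt_F_pos q (z : EuclideanSpace ℝ (Fin 3)) hcpos
      set v : EuclideanSpace ℝ (Fin 3) :=
        (WithLp.equiv 2 (Fin 3 → ℝ)).symm ![a*c, b*c, -(a^2 + b^2)] with hvdef
      have hv : ⟪(z : EuclideanSpace ℝ (Fin 3)), v⟫ = 0 := by
        simp [hvdef, PiLp.inner_apply, Fin.sum_univ_three, WithLp.equiv_symm_apply,
          ← ha, ← hb, ← hc]
        ring
      have hz := tangent_zero q z _ hF h0 v hv
      simp [hvdef, ContinuousLinearMap.neg_apply, PiLp.proj_apply,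
        WithLp.equiv_symm_apply] at hz
      have ha0 : a = 0 := by nlinarith [hz, sq_nonneg a, sq_nonneg b]
      have hb0 : b = 0 := by nlinarith [hz, sq_nonneg a, sq_nonneg b]
      have hc1 : c = 1 := by nlinarith [hsum, ha0, hb0, hcpos]
      apply hne
      have : WithLp.equiv 2 (Fin 3 → ℝ) (z : EuclideanSpace ℝ (Fin 3)) = ![0, 0, 1] := by
        funext i
        fin_cases i
        · simpa [WithLp.equiv] using ha0.symm ▸ (ha.symm : _) ▸ rfl
        · exact hb0
        · exact hc1
      rw [northPole3, ← this]
      exact ((WithLp.equiv 2 (Fin 3 → ℝ)).symm_apply_apply _).symm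
  refine ⟨main, ?_⟩
  intro δ hδ0 hδ q z hne h0
  obtain ⟨p, hp⟩ := main q z hne h0
  exact ⟨p, by linarith⟩
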